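/- Let a_1, …, a_M be points in ℝ² (the BSs) with M ≥ 4, such that no three BSs are collinear, and let K ≥ 1 be a fixed number of targets. Then the set of tuples (p_1, …, p_K) ∈ (ℝ²)^K whose entries are pairwise distinct and whose target set X = {p_1, …, p_K} admits a ghost configuration has Lebesgue measure zero in (ℝ²)^K ≅ ℝ^{2K}. Consequently, if the K targets are located independently and uniformly at random in a bounded region of positive area, ghost targets do not exist almost surely. -/

import Mathlib

open MeasureTheory

noncomputable section

/-- The Euclidean plane ℝ². -/
abbrev Plane := EuclideanSpace ℝ (Fin 2)

/-- The range set of a BS located at `a` with respect to a target set `X`: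
the set of distances from `a` to the points of `X`. -/
def rangeSet (a : Plane) (X : Set Plane) : Set ℝ := (fun p => dist a p) '' X

open RealInnerProductSpace

/-- zero set of a nondegenerate quadratic on the plane is null -/
lemma quad_null (β α : ℝ) (w : Plane) (h : β ≠ 0 ∨ w ≠ 0) :
    volume {y : Plane | β * ‖y‖^2 + ⟪w, y⟫ + α = 0} = 0 := by
  rcases eq_or_ne β 0 with hβ | hβ
  · have hw : w ≠ 0 := h.resolve_left (by simp [hβ])
    subst hβ
    set m : Plane := (-α / ‖w‖^2) • w with hm
    have hnz : (‖w‖:ℝ)^2 ≠ 0 := by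
      have : ‖w‖ ≠ 0 := norm_ne_zero_iff.mpr hw
      positivity
    have hset : {y : Plane | 0 * ‖y‖^2 + ⟪w, y⟫ + α = 0}
        = (AffineSubspace.mk' m ((ℝ ∙ w)ᗮ) : Set Plane) := by
      ext y
      simp only [Set.mem_setOf_eq, zero_mul, zero_add, SetLike.mem_coe,
        AffineSubspace.mem_mk', vsub_eq_sub,
        Submodule.mem_orthogonal_singleton_iff_inner_right]
      rw [inner_sub_right, hm, real_inner_smul_right, real_inner_self_eq_norm_sq,
        div_mul_cancel₀ _ hnz]
      constructor <;> intro hy <;> linarith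
    rw [hset]
    refine Measure.addHaar_affineSubspace _ _ ?_
    intro htop
    have hdir : ((ℝ ∙ w)ᗮ : Submodule ℝ Plane) = ⊤ := by
      rw [← AffineSubspace.direction_mk' m ((ℝ ∙ w)ᗮ), htop, AffineSubspace.direction_top]
    have hmem : w ∈ (ℝ ∙ w)ᗮ := hdir ▸ Submodule.mem_top
    have := hmem w (Submodule.mem_span_singleton_self w)
    exact hw (inner_self_eq_zero.mp this)
  · set z : Plane := (-(β⁻¹/2)) • w with hz
    set r : ℝ := ‖z‖^2 - α/β with hr
    have hset : {y : Plane | β * ‖y‖^2 + ⟪w, y⟫ + α = 0} = {y : Plane | ‖y - z‖^2 = r} := by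
      ext y
      simp only [Set.mem_setOf_eq]
      rw [norm_sub_sq_real,
        show ⟪y, z⟫ = (-(β⁻¹/2)) * ⟪w, y⟫ from by
          rw [hz, real_inner_smul_right, real_inner_comm], hr]
      set N := ‖y‖^2
      set t := ⟪w, y⟫
      set Z := ‖z‖^2
      have key : (N - 2*((-(β⁻¹/2))*t) + Z) - (Z - α/β) = β⁻¹ * (β*N + t + α) := by
        field_simp; ring
      constructor
      · intro h'; have : (N - 2*((-(β⁻¹/2))*t) + Z) - (Z - α/β) = 0 := by rw [key, h', mul_zero]
        linarith
      · intro h'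
        have h0 : β⁻¹ * (β*N + t + α) = 0 := by rw [← key]; linarith
        rcases mul_eq_zero.mp h0 with h1 | h1
        · exact absurd h1 (inv_ne_zero hβ)
        · exact h1
    rw [hset]
    rcases lt_or_ge r 0 with hrneg | hrpos
    · convert measure_empty (μ := (volume : Measure Plane))
      ext y; simp only [Set.mem_setOf_eq, Set.mem_empty_iff_false, iff_false]
      intro hy; nlinarith [sq_nonneg ‖y - z‖]
    · have hset2 : {y : Plane | ‖y - z‖^2 = r} = Metric.sphere z (Real.sqrt r) := by
        ext y
        simp only [Set.mem_setOf_eq, Metric.mem_sphere, dist_eq_norm]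
        constructor
        · intro h'; rw [← Real.sqrt_sq (norm_nonneg (y-z)), h']
        · intro h'; rw [h', Real.sq_sqrt hrpos]
      rw [hset2]
      exact Measure.addHaar_sphere volume z _

/-- Three points equidistant from two distinct points are collinear. -/
lemma collinear_of_equidist {x y : Plane} (hxy : x ≠ y) {A B C : Plane}
    (hA : dist A x = dist A y) (hB : dist B x = dist B y) (hC : dist C x = dist C y) :
    Collinear ℝ ({A, B, C} : Set Plane) := by
  have hsub : ({A, B, C} : Set Plane) ⊆ (AffineSubspace.perpBisector x y : Set Plane) := by
    intro z hz
    rcases hz with rfl | rfl | rfl <;>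
      simpa [AffineSubspace.mem_perpBisector_iff_dist_eq] using ‹_›
  rw [collinear_iff_finrank_le_one]
  have h1 : vectorSpan ℝ ({A, B, C} : Set Plane) ≤ (AffineSubspace.perpBisector x y).direction := by
    rw [AffineSubspace.direction_eq_vectorSpan]
    exact vectorSpan_mono ℝ hsub
  have h2 : Module.finrank ℝ (AffineSubspace.perpBisector x y).direction = 1 := by
    rw [AffineSubspace.direction_perpBisector]
    have hv : (y -ᵥ x : Plane) ≠ 0 := by
      simpa [vsub_eq_sub, sub_eq_zero] using (Ne.symm hxy)
    have hspan : Module.finrank ℝ (ℝ ∙ (y -ᵥ x : Plane)) = 1 := finrank_span_singleton hv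
    have := Submodule.finrank_add_finrank_orthogonal (K := (ℝ ∙ (y -ᵥ x : Plane)))
    rw [hspan] at this
    have hdim : Module.finrank ℝ Plane = 2 := finrank_euclideanSpace_fin
    omega
  calc Module.finrank ℝ (vectorSpan ℝ ({A, B, C} : Set Plane))
      ≤ Module.finrank ℝ (AffineSubspace.perpBisector x y).direction :=
        Submodule.finrank_mono h1
    _ = 1 := h2

/-- If three points are not collinear, differences span the plane. -/
lemma span_pair_eq_top_of_not_collinear {a0 a1 a2 : Plane}
    (h : ¬ Collinear ℝ ({a0, a1, a2} : Set Plane)) :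
    Submodule.span ℝ {a1 - a0, a2 - a0} = ⊤ := by
  by_contra hne
  apply h
  have hlt : Module.finrank ℝ (Submodule.span ℝ ({a1 - a0, a2 - a0} : Set Plane)) < 2 := by
    have := Submodule.finrank_lt (s := Submodule.span ℝ ({a1 - a0, a2 - a0} : Set Plane)) ?_
    · rwa [finrank_euclideanSpace_fin] at this
    · exact hne
  rw [collinear_iff_finrank_le_one]
  have hle : vectorSpan ℝ ({a0, a1, a2} : Set Plane)
      ≤ Submodule.span ℝ ({a1 - a0, a2 - a0} : Set Plane) := by
    rw [vectorSpan_eq_span_vsub_set_right ℝ (show a0 ∈ ({a0,a1,a2} : Set Plane) by simp)]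
    refine Submodule.span_le.mpr ?_
    rintro v ⟨z, hz, rfl⟩
    rcases hz with rfl | rfl | rfl
    · simp only [vsub_eq_sub, sub_self]; exact Submodule.zero_mem _
    · exact Submodule.subset_span (by simp [vsub_eq_sub])
    · exact Submodule.subset_span (by simp [vsub_eq_sub])
  have := Submodule.finrank_mono hle
  omega

/-- If every one-coordinate slice of a measurable set in a finite product is null,
the set is null. -/
lemma null_of_slices_null {ι : Type*} [Fintype ι] [DecidableEq ι] {α : Type*}
    [MeasureSpace α] [SigmaFinite (volume : Measure α)] [Nonempty α]
    {s : Set (ι → α)} (hs : MeasurableSet s) (j : ι)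
    (h : ∀ q : ι → α, volume {y : α | Function.update q j y ∈ s} = 0) :
    volume s = 0 := by
  classical
  set p : ι → Prop := fun i => i ≠ j with hp
  set e := MeasurableEquiv.piEquivPiSubtypeProd (fun _ : ι => α) p with he
  have hmp := measurePreserving_piEquivPiSubtypeProd (fun _ : ι => (volume : Measure α)) p
  rw [← he] at hmp
  have him : MeasurableSet (⇑e.symm ⁻¹' s) := e.symm.measurable hs
  have hvs : ((Measure.pi fun _ : Subtype p => (volume : Measure α)).prod
      (Measure.pi fun _ : {i // ¬ p i} => (volume : Measure α))) (⇑e.symm ⁻¹' s) = volume s := by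
    rw [← hmp.map_eq, MeasurableEquiv.map_apply]
    have hpre : ⇑e ⁻¹' (⇑e.symm ⁻¹' s) = s := by
      ext w; simp
    rw [hpre]; rfl
  rw [← hvs, Measure.measure_prod_null him]
  refine Filter.Eventually.of_forall fun x => ?_
  show (Measure.pi fun _ : {i // ¬ p i} => (volume : Measure α))
    (Prod.mk x ⁻¹' (⇑e.symm ⁻¹' s)) = 0
  haveI hu : Unique {i // ¬ p i} :=
    ⟨⟨⟨j, by simp [hp]⟩⟩, fun z => Subtype.ext (not_not.mp z.2)⟩
  have hφ := (measurePreserving_piUnique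
    (fun _ : {i // ¬ p i} => (volume : Measure α))).symm (MeasurableEquiv.piUnique _)
  rw [← hφ.map_eq, MeasurableEquiv.map_apply]
  have hset : (MeasurableEquiv.piUnique (fun _ : {i // ¬ p i} => α)).symm ⁻¹'
      (Prod.mk x ⁻¹' (⇑e.symm ⁻¹' s))
      = {y : α | Function.update (fun i => if hpi : p i then x ⟨i, hpi⟩
          else Classical.arbitrary α) j y ∈ s} := by
    ext y
    simp only [Set.mem_preimage, Set.mem_setOf_eq]
    have hcomp : e.symm (x, (MeasurableEquiv.piUnique (fun _ : {i // ¬ p i} => α)).symm y)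
        = Function.update (fun i => if hpi : p i then x ⟨i, hpi⟩ else Classical.arbitrary α) j y := by
      funext i
      by_cases hij : i = j
      · subst hij
        simp [e, MeasurableEquiv.piEquivPiSubtypeProd, Equiv.piEquivPiSubtypeProd,
          MeasurableEquiv.piUnique, Equiv.piUnique, hp]
      · simp [e, MeasurableEquiv.piEquivPiSubtypeProd, Equiv.piEquivPiSubtypeProd,
          MeasurableEquiv.piUnique, Equiv.piUnique, hp, Function.update_of_ne hij, hij]
    rw [hcomp]
  rw [hset]
  exact h _

/-- Null set: configurations where `C + c0 * ‖b0 - y‖² + ‖b3 - y‖² = 0`. -/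
lemma slice_quad_null (b0 b3 : Plane) (c0 C : ℝ)
    (hcond : c0 + 1 ≠ 0 ∨ c0 • b0 + b3 ≠ 0) :
    volume {y : Plane | C + c0 * ‖b0 - y‖^2 + ‖b3 - y‖^2 = 0} = 0 := by
  have hset : {y : Plane | C + c0 * ‖b0 - y‖^2 + ‖b3 - y‖^2 = 0}
      = {y : Plane | (c0 + 1) * ‖y‖^2 + ⟪(-2 : ℝ) • (c0 • b0 + b3), y⟫
          + (C + c0 * ‖b0‖^2 + ‖b3‖^2) = 0} := by
    ext y
    simp only [Set.mem_setOf_eq]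
    rw [← neg_sub y b0, ← neg_sub y b3, norm_neg, norm_neg, norm_sub_sq_real,
      norm_sub_sq_real, real_inner_smul_left, inner_add_left, real_inner_smul_left,
      real_inner_comm y b0, real_inner_comm y b3]
    constructor <;> intro h' <;> linarith
  rw [hset]
  refine quad_null _ _ _ ?_
  rcases hcond with h' | h'
  · exact Or.inl h'
  · exact Or.inr (smul_ne_zero (by norm_num) h')

theorem ghost_targets_measure_zero (M K : ℕ) (hM : 4 ≤ M) (hK : 1 ≤ K)
    (a : Fin M → Plane)
    (hcol : ∀ i j k : Fin M, i ≠ j → i ≠ k → j ≠ k →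
      ¬ Collinear ℝ ({a i, a j, a k} : Set Plane)) :
    volume {p : Fin K → Plane | Function.Injective p ∧
      ∃ XG : Set Plane, XG.Finite ∧ XG.ncard = K ∧ XG ≠ Set.range p ∧
        ∀ m : Fin M, rangeSet (a m) XG = rangeSet (a m) (Set.range p)} = 0 := by
  classical
  -- the four base stations
  set b : Fin 4 → Plane := fun i => a (Fin.castLE hM i) with hb
  have hbcol : ∀ i j k : Fin 4, i ≠ j → i ≠ k → j ≠ k →
      ¬ Collinear ℝ ({b i, b j, b k} : Set Plane) := by
    intro i j k hij hik hjk
    exact hcol _ _ _ (fun h => hij (Fin.castLE_injective hM h))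
      (fun h => hik (Fin.castLE_injective hM h)) (fun h => hjk (Fin.castLE_injective hM h))
  have hbne : ∀ i j : Fin 4, i ≠ j → b i ≠ b j := by
    intro i j hij heq
    obtain ⟨k, hki, hkj⟩ : ∃ k : Fin 4, k ≠ i ∧ k ≠ j := by
      have h4 : (({i, j} : Finset (Fin 4))ᶜ).Nonempty := by
        rw [← Finset.card_pos, Finset.card_compl]
        have hle : ({i, j} : Finset (Fin 4)).card ≤ 2 :=
          (Finset.card_insert_le _ _).trans (by simp)
        have : Fintype.card (Fin 4) = 4 := by simp
        omega
      obtain ⟨k, hk⟩ := h4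
      rw [Finset.mem_compl, Finset.mem_insert, Finset.mem_singleton] at hk
      push_neg at hk
      exact ⟨k, hk.1, hk.2⟩
    apply hbcol i j k hij (Ne.symm hki) (Ne.symm hkj)
    rw [heq]
    have hpair : ({b j, b j, b k} : Set Plane) = {b j, b k} := by simp
    rw [hpair]
    exact collinear_pair ℝ _ _
  -- coefficients from non-collinearity of b 0, b 1, b 2
  have hspan : Submodule.span ℝ {b 1 - b 0, b 2 - b 0} = ⊤ :=
    span_pair_eq_top_of_not_collinear (hbcol 0 1 2 (by decide) (by decide) (by decide))
  obtain ⟨l, m, hlm⟩ : ∃ l m : ℝ, l • (b 1 - b 0) + m • (b 2 - b 0) = b 3 - b 0 :=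
    Submodule.mem_span_pair.mp (hspan ▸ Submodule.mem_top)
  -- coefficient function
  set c : Fin 4 → ℝ := ![l + m - 1, -l, -m, 1] with hc
  set Cst : ℝ := l * (‖b 1‖^2 - ‖b 0‖^2) + m * (‖b 2‖^2 - ‖b 0‖^2) - (‖b 3‖^2 - ‖b 0‖^2)
    with hCst
  -- the covering family
  set Z : (Fin 4 → Fin K) → Set (Fin K → Plane) :=
    fun σ => {p | Cst + ∑ i : Fin 4, c i * ‖b i - p (σ i)‖^2 = 0} with hZ
  set Adm : (Fin 4 → Fin K) → Prop :=
    fun σ => ∀ i j : Fin 4, i ≠ 3 → j ≠ 3 → i ≠ j → ¬(σ i = σ 3 ∧ σ j = σ 3) with hAdm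
  -- Step 1: inclusion
  have hincl : {p : Fin K → Plane | Function.Injective p ∧
      ∃ XG : Set Plane, XG.Finite ∧ XG.ncard = K ∧ XG ≠ Set.range p ∧
        ∀ m : Fin M, rangeSet (a m) XG = rangeSet (a m) (Set.range p)}
      ⊆ ⋃ (σ : Fin 4 → Fin K) (_ : Adm σ), Z σ := by
    rintro p ⟨hinj, XG, hfin, hcard, hne, hrs⟩
    -- a ghost point
    obtain ⟨x, hxXG, hxnr⟩ : ∃ x ∈ XG, x ∉ Set.range p := by
      by_contra hcon
      push_neg at hcon
      apply hne
      refine Set.eq_of_subset_of_ncard_le hcon ?_ (Set.finite_range p)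
      have : (Set.range p).ncard = K := by
        rw [← Nat.card_coe_set_eq, Nat.card_range_of_injective hinj]
        simp
      rw [this, hcard]
    -- choose matched indices
    have hex : ∀ i : Fin 4, ∃ t : Fin K, dist (b i) x = dist (b i) (p t) := by
      intro i
      have hx : dist (b i) x ∈ rangeSet (b i) XG := ⟨x, hxXG, rfl⟩
      rw [hb] at hx ⊢
      rw [hrs (Fin.castLE hM i)] at hx
      obtain ⟨w, ⟨t, rfl⟩, hw⟩ := hx
      exact ⟨t, hw.symm⟩
    choose σ hσ using hex
    have hxne : ∀ t : Fin K, x ≠ p t := by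
      intro t h'; exact hxnr ⟨t, h'.symm⟩
    -- admissibility
    have hadm : Adm σ := by
      intro i j hi3 hj3 hij ⟨hiσ, hjσ⟩
      refine hbcol i j 3 hij hi3 hj3 ?_
      refine collinear_of_equidist (hxne (σ 3)) ?_ ?_ ?_
      · rw [← hiσ]; exact hσ i
      · rw [← hjσ]; exact hσ j
      · exact hσ 3
    refine Set.mem_iUnion.mpr ⟨σ, Set.mem_iUnion.mpr ⟨hadm, ?_⟩⟩
    -- the algebraic identity
    have heq : ∀ i : Fin 4, ‖b i‖^2 - 2*⟪b i, x⟫ + ‖x‖^2 = ‖b i - p (σ i)‖^2 := by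
      intro i
      have hsq : ‖b i - x‖^2 = ‖b i - p (σ i)‖^2 := by
        rw [← dist_eq_norm, ← dist_eq_norm, hσ i]
      rw [← hsq, norm_sub_sq_real]
    have hinner : l * (⟪b 1, x⟫ - ⟪b 0, x⟫) + m * (⟪b 2, x⟫ - ⟪b 0, x⟫)
        = ⟪b 3, x⟫ - ⟪b 0, x⟫ := by
      have h' : ⟪l • (b 1 - b 0) + m • (b 2 - b 0), x⟫ = ⟪b 3 - b 0, x⟫ := by rw [hlm]
      rw [inner_add_left, real_inner_smul_left, real_inner_smul_left, inner_sub_left,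
        inner_sub_left, inner_sub_left] at h'
      exact h'
    show Cst + ∑ i : Fin 4, c i * ‖b i - p (σ i)‖^2 = 0
    rw [Fin.sum_univ_four, hCst]
    simp only [hc, Matrix.cons_val_zero, Matrix.cons_val_one, Matrix.head_cons,
      Matrix.cons_val_two, Matrix.tail_cons, Matrix.cons_val_three]
    linear_combination (-(l + m - 1)) * (heq 0) + l * (heq 1) + m * (heq 2) - (heq 3)
      + 2 * hinner
  refine measure_mono_null hincl (measure_iUnion_null fun σ => measure_iUnion_null fun hadm => ?_)
  -- Step 2: each admissible Z σ is null
  have hmeas : MeasurableSet (Z σ) := by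
    have hcont : Continuous (fun p : Fin K → Plane =>
        Cst + ∑ i : Fin 4, c i * ‖b i - p (σ i)‖^2) := by fun_prop
    exact measurableSet_eq_fun hcont.measurable measurable_const
  refine null_of_slices_null hmeas (σ 3) fun q => ?_
  have hup : ∀ (y : Plane) (i : Fin 4),
      Function.update q (σ 3) y (σ i) = if σ i = σ 3 then y else q (σ i) :=
    fun y i => Function.update_apply q (σ 3) y (σ i)
  by_cases h0 : σ 0 = σ 3
  · -- fiber {0, 3}
    have h1 : σ 1 ≠ σ 3 := fun h' => hadm 0 1 (by decide) (by decide) (by decide) ⟨h0, h'⟩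
    have h2 : σ 2 ≠ σ 3 := fun h' => hadm 0 2 (by decide) (by decide) (by decide) ⟨h0, h'⟩
    have hset : {y : Plane | Function.update q (σ 3) y ∈ Z σ}
        = {y : Plane | (Cst + (-l) * ‖b 1 - q (σ 1)‖^2 + (-m) * ‖b 2 - q (σ 2)‖^2)
            + (l + m - 1) * ‖b 0 - y‖^2 + ‖b 3 - y‖^2 = 0} := by
      ext y
      simp only [hZ, Set.mem_setOf_eq, Fin.sum_univ_four]
      rw [hup y 0, hup y 1, hup y 2, hup y 3, if_pos h0, if_neg h1, if_neg h2, if_pos rfl]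
      simp only [hc, Matrix.cons_val_zero, Matrix.cons_val_one, Matrix.head_cons,
        Matrix.cons_val_two, Matrix.tail_cons, Matrix.cons_val_three]
      constructor <;> intro h' <;> linarith
    rw [hset]
    refine slice_quad_null _ _ _ _ ?_
    rcases eq_or_ne (l + m) 0 with hlm0 | hlm0
    · refine Or.inr ?_
      have : (l + m - 1) • b 0 + b 3 = b 3 - b 0 := by
        rw [hlm0]; module
      rw [this]
      exact sub_ne_zero.mpr (hbne 3 0 (by decide))
    · exact Or.inl (by intro h'; apply hlm0; linarith)
  · by_cases h1 : σ 1 = σ 3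
    · have h2 : σ 2 ≠ σ 3 := fun h' => hadm 1 2 (by decide) (by decide) (by decide) ⟨h1, h'⟩
      have hset : {y : Plane | Function.update q (σ 3) y ∈ Z σ}
          = {y : Plane | (Cst + (l + m - 1) * ‖b 0 - q (σ 0)‖^2 + (-m) * ‖b 2 - q (σ 2)‖^2)
              + (-l) * ‖b 1 - y‖^2 + ‖b 3 - y‖^2 = 0} := by
        ext y
        simp only [hZ, Set.mem_setOf_eq, Fin.sum_univ_four]
        rw [hup y 0, hup y 1, hup y 2, hup y 3, if_neg h0, if_pos h1, if_neg h2, if_pos rfl]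
        simp only [hc, Matrix.cons_val_zero, Matrix.cons_val_one, Matrix.head_cons,
          Matrix.cons_val_two, Matrix.tail_cons, Matrix.cons_val_three]
        constructor <;> intro h' <;> linarith
      rw [hset]
      refine slice_quad_null _ _ _ _ ?_
      rcases eq_or_ne l 1 with hl1 | hl1
      · refine Or.inr ?_
        have : (-l) • b 1 + b 3 = b 3 - b 1 := by rw [hl1]; module
        rw [this]
        exact sub_ne_zero.mpr (hbne 3 1 (by decide))
      · exact Or.inl (by intro h'; apply hl1; linarith)
    · by_cases h2 : σ 2 = σ 3
      · have hset : {y : Plane | Function.update q (σ 3) y ∈ Z σ}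
            = {y : Plane | (Cst + (l + m - 1) * ‖b 0 - q (σ 0)‖^2 + (-l) * ‖b 1 - q (σ 1)‖^2)
                + (-m) * ‖b 2 - y‖^2 + ‖b 3 - y‖^2 = 0} := by
          ext y
          simp only [hZ, Set.mem_setOf_eq, Fin.sum_univ_four]
          rw [hup y 0, hup y 1, hup y 2, hup y 3, if_neg h0, if_neg h1, if_pos h2, if_pos rfl]
          simp only [hc, Matrix.cons_val_zero, Matrix.cons_val_one, Matrix.head_cons,
            Matrix.cons_val_two, Matrix.tail_cons, Matrix.cons_val_three]
          constructor <;> intro h' <;> linarith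
        rw [hset]
        refine slice_quad_null _ _ _ _ ?_
        rcases eq_or_ne m 1 with hm1 | hm1
        · refine Or.inr ?_
          have : (-m) • b 2 + b 3 = b 3 - b 2 := by rw [hm1]; module
          rw [this]
          exact sub_ne_zero.mpr (hbne 3 2 (by decide))
        · exact Or.inl (by intro h'; apply hm1; linarith)
      · have hset : {y : Plane | Function.update q (σ 3) y ∈ Z σ}
            = {y : Plane | (Cst + (l + m - 1) * ‖b 0 - q (σ 0)‖^2 + (-l) * ‖b 1 - q (σ 1)‖^2
                + (-m) * ‖b 2 - q (σ 2)‖^2)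
                + (0 : ℝ) * ‖b 0 - y‖^2 + ‖b 3 - y‖^2 = 0} := by
          ext y
          simp only [hZ, Set.mem_setOf_eq, Fin.sum_univ_four]
          rw [hup y 0, hup y 1, hup y 2, hup y 3, if_neg h0, if_neg h1, if_neg h2, if_pos rfl]
          simp only [hc, Matrix.cons_val_zero, Matrix.cons_val_one, Matrix.head_cons,
            Matrix.cons_val_two, Matrix.tail_cons, Matrix.cons_val_three]
          constructor <;> intro h' <;> linarith
        rw [hset]
        exact slice_quad_null _ _ _ _ (Or.inl (by norm_num))
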